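/- Let d ≥ 1 be odd and let L be the (d+2)×(d+2) real matrix with L_{ii} = d+1 and L_{ij} = (-1)^{i+j-1} for i ≠ j. Then the all-ones vector does not lie in the column span of L; equivalently, the matrix obtained by appending the all-ones row to L has rank d+2. -/

import Mathlib

open Matrix

/-- The `d`-th Laplacian matrix of the boundary of the `(d+1)`-simplex:
`L_{ii} = d+1` and `L_{ij} = (-1)^{i+j-1}` for `i ≠ j` (1-indexed; here 0-indexed,
so the sign is `(-1)^{i+j+1}`). -/
def lap (d : ℕ) : Matrix (Fin (d+2)) (Fin (d+2)) ℝ :=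
  Matrix.of fun i j => if i = j then (d+1 : ℝ) else (-1 : ℝ)^((i:ℕ)+(j:ℕ)+1)

/-- The matrix `L` with the all-ones row appended. -/
def lapOnes (d : ℕ) : Matrix ((Fin (d+2)) ⊕ Unit) (Fin (d+2)) ℝ :=
  Matrix.of fun i j => Sum.elim (fun r => lap d r j) (fun _ => (1 : ℝ)) i

lemma v_mul_self (n : ℕ) : (-1:ℝ)^n * (-1:ℝ)^n = 1 := by
  rw [← pow_add]; exact Even.neg_one_pow ⟨n, rfl⟩

lemma lap_apply (d : ℕ) (i j : Fin (d+2)) :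
    lap d i j = (d+2) * (if i = j then 1 else 0) - (-1:ℝ)^(i:ℕ) * (-1:ℝ)^(j:ℕ) := by
  unfold lap
  simp only [of_apply]
  by_cases h : i = j
  · subst h
    rw [if_pos rfl, if_pos rfl, v_mul_self]
    ring
  · rw [if_neg h, if_neg h, pow_succ, pow_add]
    ring

lemma sum_v (d : ℕ) (ho : Odd d) : ∑ j : Fin (d+2), (-1:ℝ)^(j:ℕ) = 1 := by
  rw [Fin.sum_univ_eq_sum_range, neg_one_geom_sum, if_neg]
  exact (Nat.not_even_iff_odd).mpr (ho.add_even even_two)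

lemma sum_lap (d : ℕ) (c : Fin (d+2) → ℝ) (i : Fin (d+2)) :
    ∑ j, c j * lap d i j
      = (d+2) * c i - (-1:ℝ)^(i:ℕ) * ∑ j : Fin (d+2), (-1:ℝ)^(j:ℕ) * c j := by
  have h : ∀ j : Fin (d+2), c j * lap d i j
      = (if i = j then (d+2) * c j else 0) - (-1:ℝ)^(i:ℕ) * ((-1:ℝ)^(j:ℕ) * c j) := by
    intro j
    rw [lap_apply]
    by_cases h : i = j <;> simp [h] <;> ring
  simp_rw [h]
  rw [Finset.sum_sub_distrib, Finset.sum_ite_eq, ← Finset.mul_sum]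
  simp

/-- for odd `d ≥ 1`, the all-ones vector does not lie in the column
span of `L`; equivalently, appending the all-ones row to `L` gives a matrix of
rank `d+2`. -/
theorem stmt4 (d : ℕ) (hd : 1 ≤ d) (ho : Odd d) :
    (1 : Fin (d+2) → ℝ) ∉ Submodule.span ℝ (Set.range (lap d)ᵀ) ∧
    (lapOnes d).rank = d + 2 := by
  have hcard : (Finset.univ : Finset (Fin (d+2))).card = d + 2 := by simp
  constructor
  · intro h
    replace h := (Submodule.mem_span_range_iff_exists_fun ℝ).1 h
    obtain ⟨c, hc⟩ := h
    set S : ℝ := ∑ j : Fin (d+2), (-1:ℝ)^(j:ℕ) * c j with hS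
    have key : ∀ i : Fin (d+2), (d+2:ℝ) * c i - (-1:ℝ)^(i:ℕ) * S = 1 := by
      intro i
      have := congrFun hc i
      simp only [Finset.sum_apply, Pi.smul_apply, transpose_apply, smul_eq_mul,
        Pi.one_apply] at this
      rw [← sum_lap d c i]
      exact this
    have h1 : ∑ i : Fin (d+2), (-1:ℝ)^(i:ℕ) * ((d+2:ℝ) * c i - (-1:ℝ)^(i:ℕ) * S)
        = ∑ i : Fin (d+2), (-1:ℝ)^(i:ℕ) := by
      apply Finset.sum_congr rfl
      intro i _
      rw [key i, mul_one]
    have expand : ∀ i : Fin (d+2), (-1:ℝ)^(i:ℕ) * ((d+2:ℝ) * c i - (-1:ℝ)^(i:ℕ) * S)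
        = (d+2:ℝ) * ((-1:ℝ)^(i:ℕ) * c i) - S := by
      intro i
      rw [mul_sub, ← mul_assoc ((-1:ℝ)^(i:ℕ)) ((-1:ℝ)^(i:ℕ)), v_mul_self, one_mul]
      ring
    rw [Finset.sum_congr rfl (fun i _ => expand i), Finset.sum_sub_distrib,
      ← Finset.mul_sum, ← hS, Finset.sum_const, hcard, sum_v d ho] at h1
    simp only [nsmul_eq_mul] at h1
    push_cast at h1
    linarith
  · have hinj : Function.Injective (lapOnes d).mulVecLin := by
      rw [← LinearMap.ker_eq_bot, LinearMap.ker_eq_bot']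
      intro x hx
      have hsum : ∑ j, x j = 0 := by
        have := congrFun hx (Sum.inr ())
        simpa [lapOnes, mulVec, dotProduct] using this
      set S : ℝ := ∑ j : Fin (d+2), (-1:ℝ)^(j:ℕ) * x j with hS
      have hrow : ∀ i : Fin (d+2), (d+2:ℝ) * x i - (-1:ℝ)^(i:ℕ) * S = 0 := by
        intro i
        have := congrFun hx (Sum.inl i)
        simp only [mulVecLin_apply, Pi.zero_apply] at this
        rw [← sum_lap d x i]
        rw [show (∑ j, x j * lap d i j) = ∑ j, lap d i j * x j by
          exact Finset.sum_congr rfl fun j _ => mul_comm _ _]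
        simpa [lapOnes, mulVec, dotProduct] using this
      have hsum2 : ∑ i : Fin (d+2), ((d+2:ℝ) * x i - (-1:ℝ)^(i:ℕ) * S) = 0 := by
        simp [hrow]
      rw [Finset.sum_sub_distrib, ← Finset.mul_sum, hsum, mul_zero,
        ← Finset.sum_mul, sum_v d ho, one_mul, zero_sub, neg_eq_zero] at hsum2
      funext i
      have := hrow i
      rw [hsum2, mul_zero, sub_zero] at this
      have hne : (d+2:ℝ) ≠ 0 := by positivity
      simpa [hne] using this
    have := LinearMap.finrank_range_of_inj hinj
    rw [Matrix.rank, this]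
    simp
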